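/- For every admissible state (h, v1, v2, P11, P12, P22) with h > 0, P11 > 0, P22 > 0 and D := P11 P22 − P12^2 > 0, and every g > 0, the entropy variable vector V ∈ ℝ^6 is orthogonal to both non-conservative coefficient vectors: V · B^x = 0 and V · B^y = 0, where B^x = (0, g h, 0, g h v1, (1/2) g h v2, 0) and B^y = (0, 0, g h, 0, (1/2) g h v1, g h v2). -/

import Mathlib

open Matrix

/-- The entropy variable vector of the shear shallow water model, as a function of the
primitive state `(h, v1, v2, P11, P12, P22)`. -/
noncomputable def entVar (h v1 v2 P11 P12 P22 : ℝ) : Fin 6 → ℝ :=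
  ![4 - Real.log ((P11 * P22 - P12 ^ 2) / h ^ 2)
      - (P11 * v2 ^ 2 + P22 * v1 ^ 2 - 2 * P12 * v1 * v2) / (P11 * P22 - P12 ^ 2),
    2 * (P22 * v1 - P12 * v2) / (P11 * P22 - P12 ^ 2),
    2 * (P11 * v2 - P12 * v1) / (P11 * P22 - P12 ^ 2),
    -2 * P22 / (P11 * P22 - P12 ^ 2),
    4 * P12 / (P11 * P22 - P12 ^ 2),
    -2 * P11 / (P11 * P22 - P12 ^ 2)]

/-- For every admissible state and every `g > 0`, the entropy variable vector is orthogonal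
to both non-conservative coefficient vectors `B^x` and `B^y` of the SSW model. -/
theorem ssw_entVar_orthogonal_B (h v1 v2 P11 P12 P22 g : ℝ)
    (hh : 0 < h) (h11 : 0 < P11) (h22 : 0 < P22)
    (hD : 0 < P11 * P22 - P12 ^ 2) (hg : 0 < g) :
    entVar h v1 v2 P11 P12 P22 ⬝ᵥ ![0, g * h, 0, g * h * v1, 1 / 2 * g * h * v2, 0] = 0 ∧
    entVar h v1 v2 P11 P12 P22 ⬝ᵥ ![0, 0, g * h, 0, 1 / 2 * g * h * v1, g * h * v2] = 0 := by
  have hD' : P11 * P22 - P12 ^ 2 ≠ 0 := ne_of_gt hD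
  constructor <;>
  · simp [entVar, Matrix.cons_dotProduct, Matrix.dotProduct_of_isEmpty, Matrix.vecHead, Matrix.vecTail]
    field_simp
    ring
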